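/- Let σ be a primitive substitution on alphabet A with incidence matrix M. Then the return space R(X_σ) (the span of abelianization vectors of return words of the subshift X_σ) satisfies M·R(X_σ) ⊆ R(X_σ), i.e., the image under σ of any return word is a concatenation of return words, so its abelianization lies in R(X_σ). -/
import Mathlib


open Matrix

/-- `n`-th iterate of the substitution `σ` applied to the letter `a`. -/
def substIter {A : Type*} (σ : A → List A) (n : ℕ) (a : A) : List A :=
  (fun l => l.flatMap σ)^[n] [a]

/-- The language of a substitution: factors of the words `σ^n(a)`. -/
def langSubst {A : Type*} (σ : A → List A) : Set (List A) :=
  {w | ∃ (a : A) (n : ℕ), w <:+: substIter σ n a}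

/-- A substitution is primitive if it is non-erasing and some iterate of every letter
contains every letter. -/
def IsPrimitive {A : Type*} (σ : A → List A) : Prop :=
  (∀ a, σ a ≠ []) ∧ ∃ n : ℕ, ∀ a b : A, b ∈ substIter σ n a

/-- `w` is a return word for the language `L`. -/
def IsReturnWord {A : Type*} [DecidableEq A] (L : Set (List A)) (w : List A) : Prop :=
  ∃ (a : A) (u : List A), w = a :: u ∧ w ++ [a] ∈ L ∧ w.count a = 1

/-- The abelianization vector of a word, as a vector of `ℝ^A`. -/
def abel {A : Type*} [DecidableEq A] (w : List A) : A → ℝ := fun a => (w.count a : ℝ)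

/-- The incidence matrix of a substitution: `M a b = |σ(b)|_a`. -/
def incidence {A : Type*} [DecidableEq A] (σ : A → List A) : Matrix A A ℝ :=
  fun a b => ((σ b).count a : ℝ)

lemma abel_append {A : Type*} [DecidableEq A] (u v : List A) :
    abel (u ++ v) = abel u + abel v := by
  funext a; simp [abel, List.count_append]

lemma mulVec_single_abel {A : Type*} [Fintype A] [DecidableEq A] (σ : A → List A) (c : A) :
    (incidence σ).mulVec (abel [c]) = abel (σ c) := by
  funext a
  simp only [Matrix.mulVec, dotProduct, abel, incidence]
  rw [Finset.sum_eq_single c]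
  · simp
  · intro b _ hb
    simp [List.count_singleton', Ne.symm hb]
  · simp

lemma mulVec_abel {A : Type*} [Fintype A] [DecidableEq A] (σ : A → List A) (w : List A) :
    (incidence σ).mulVec (abel w) = abel (w.flatMap σ) := by
  induction w with
  | nil =>
      funext a; simp [Matrix.mulVec, dotProduct, abel]
  | cons c t ih =>
      have h1 : abel (c :: t) = abel [c] + abel t := abel_append [c] t
      rw [h1, Matrix.mulVec_add, ih, mulVec_single_abel, ← abel_append]
      simp

lemma lang_infix {A : Type*} (σ : A → List A) {u w : List A}
    (h : u <:+: w) (hw : w ∈ langSubst σ) : u ∈ langSubst σ := by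
  obtain ⟨a, n, hn⟩ := hw; exact ⟨a, n, h.trans hn⟩

lemma lang_flatMap {A : Type*} (σ : A → List A) {w : List A}
    (hw : w ∈ langSubst σ) : w.flatMap σ ∈ langSubst σ := by
  obtain ⟨a, n, s, t, hst⟩ := hw
  refine ⟨a, n + 1, s.flatMap σ, t.flatMap σ, ?_⟩
  have h : substIter σ (n + 1) a = (substIter σ n a).flatMap σ := by
    simp [substIter, Function.iterate_succ_apply']
  rw [h, ← hst]
  simp

lemma exists_first_split {A : Type*} [DecidableEq A] {b : A} {t : List A} (h : b ∈ t) :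
    ∃ t₁ t₂, t = t₁ ++ b :: t₂ ∧ b ∉ t₁ := by
  induction t with
  | nil => simp at h
  | cons c s ih =>
      by_cases hc : c = b
      · exact ⟨[], s, by simp [hc], by simp⟩
      · have hb : b ∈ s := by
          rcases List.mem_cons.mp h with h' | h'
          · exact absurd h'.symm hc
          · exact h'
        obtain ⟨t₁, t₂, rfl, h1⟩ := ih hb
        refine ⟨c :: t₁, t₂, by simp, ?_⟩
        simp only [List.mem_cons, not_or]
        exact ⟨fun e => hc e.symm, h1⟩

lemma abel_mem_span {A : Type*} [Fintype A] [DecidableEq A] (σ : A → List A) :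
    ∀ (n : ℕ) (s : List A) (b : A), s.length ≤ n → s.head? = some b →
      s ++ [b] ∈ langSubst σ →
      abel s ∈ Submodule.span ℝ (abel '' {w | IsReturnWord (langSubst σ) w}) := by
  intro n
  induction n with
  | zero =>
      intro s b hlen hhead _
      cases s with
      | nil => simp at hhead
      | cons c t => simp at hlen
  | succ n ih =>
      intro s b hlen hhead hL
      cases s with
      | nil => simp at hhead
      | cons c t =>
        have hcb : c = b := by simpa using hhead
        subst hcb
        by_cases hb : c ∈ t
        · obtain ⟨t₁, t₂, rfl, hnot⟩ := exists_first_split hb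
          have hsplit : (c :: (t₁ ++ c :: t₂)) = (c :: t₁) ++ (c :: t₂) := by simp
          have hsplit' : (c :: (t₁ ++ c :: t₂)) ++ [c]
              = (c :: t₁ ++ [c]) ++ (t₂ ++ [c]) := by simp
          have hr : IsReturnWord (langSubst σ) (c :: t₁) := by
            refine ⟨c, t₁, rfl, ?_, ?_⟩
            · apply lang_infix σ _ hL
              refine List.IsPrefix.isInfix ⟨t₂ ++ [c], ?_⟩
              rw [hsplit']
            · simp [List.count_cons, List.count_eq_zero.mpr hnot]
          have hrmem : abel (c :: t₁) ∈
              Submodule.span ℝ (abel '' {w | IsReturnWord (langSubst σ) w}) :=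
            Submodule.subset_span ⟨_, hr, rfl⟩
          have hlen2 : (c :: t₂).length ≤ n := by
            simp only [List.length_cons, List.length_append] at hlen ⊢
            omega
          have hL2 : (c :: t₂) ++ [c] ∈ langSubst σ := by
            apply lang_infix σ _ hL
            refine List.IsSuffix.isInfix ⟨c :: t₁, ?_⟩
            simp
          have hsmem := ih (c :: t₂) c hlen2 rfl hL2
          have habel : abel (c :: (t₁ ++ c :: t₂)) = abel (c :: t₁) + abel (c :: t₂) := by
            rw [hsplit, abel_append]
          rw [habel]
          exact Submodule.add_mem _ hrmem hsmem
        · refine Submodule.subset_span ⟨_, ⟨c, t, rfl, hL, ?_⟩, rfl⟩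
          simp [List.count_cons, List.count_eq_zero.mpr hb]

/-- The return space of the subshift of a primitive substitution is invariant under
the incidence matrix: `M · R(X_σ) ⊆ R(X_σ)`. -/
theorem incidence_maps_returnSpace_to_returnSpace
    {A : Type*} [Fintype A] [DecidableEq A]
    (σ : A → List A) (hprim : IsPrimitive σ) :
    ∀ v ∈ Submodule.span ℝ (abel '' {w | IsReturnWord (langSubst σ) w}),
      (incidence σ).mulVec v ∈
        Submodule.span ℝ (abel '' {w | IsReturnWord (langSubst σ) w}) := by
  intro v hv
  have key : Submodule.span ℝ (abel '' {w | IsReturnWord (langSubst σ) w}) ≤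
      Submodule.comap ((incidence σ).mulVecLin)
        (Submodule.span ℝ (abel '' {w | IsReturnWord (langSubst σ) w})) := by
    rw [Submodule.span_le]
    rintro _ ⟨w, hw, rfl⟩
    simp only [Set.mem_preimage, SetLike.mem_coe, Submodule.mem_comap, Matrix.mulVecLin_apply]
    rw [mulVec_abel]
    obtain ⟨a, u, rfl, hL, hcount⟩ := hw
    obtain ⟨hne, -⟩ := hprim
    obtain ⟨b, rest, hσa⟩ : ∃ b rest, σ a = b :: rest := by
      cases h : σ a with
      | nil => exact absurd h (hne a)
      | cons b rest => exact ⟨b, rest, rfl⟩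
    have hhead : ((a :: u).flatMap σ).head? = some b := by
      simp [hσa]
    have h1 : ((a :: u) ++ [a]).flatMap σ ∈ langSubst σ := lang_flatMap σ hL
    have h2 : (a :: u).flatMap σ ++ [b] ∈ langSubst σ := by
      apply lang_infix σ _ h1
      refine List.IsPrefix.isInfix ⟨rest, ?_⟩
      simp [hσa]
    exact abel_mem_span σ ((a :: u).flatMap σ).length _ _ le_rfl hhead h2
  have := key hv
  simpa using this
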